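/- If A and B are nilpotent n×n matrices with A + B = i·j, then the smallest A,B-invariant subspace containing i equals K[A]i, the cyclic K[A]-submodule generated by i; similarly j·K⟨A,B⟩ = j·K[A]. -/
import Mathlib


open Matrix

lemma vecMulVec_mulVec' {n : ℕ} {K : Type*} [Field K] (i j v : Fin n → K) :
    Matrix.vecMulVec i j *ᵥ v = (j ⬝ᵥ v) • i := by
  ext x
  simp [Matrix.vecMulVec_apply, Matrix.mulVec, dotProduct, Finset.mul_sum,
    Finset.sum_mul, mul_assoc, mul_comm, mul_left_comm]

lemma vecMul_vecMulVec' {n : ℕ} {K : Type*} [Field K] (i j v : Fin n → K) :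
    v ᵥ* Matrix.vecMulVec i j = (v ⬝ᵥ i) • j := by
  ext x
  simp [Matrix.vecMulVec_apply, Matrix.vecMul, dotProduct, Finset.mul_sum,
    Finset.sum_mul, mul_assoc, mul_comm, mul_left_comm]

theorem stmt3 {n : ℕ} {K : Type*} [Field K]
    (A B : Matrix (Fin n) (Fin n) K) (i j : Fin n → K)
    (hA : IsNilpotent A) (hB : IsNilpotent B)
    (h : A + B = Matrix.vecMulVec i j) :
    Submodule.span K
        (Set.range fun p : FreeAlgebra K (Fin 2) => (FreeAlgebra.lift K ![A, B] p) *ᵥ i) =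
      Submodule.span K (Set.range fun k : ℕ => (A ^ k) *ᵥ i) ∧
    Submodule.span K
        (Set.range fun p : FreeAlgebra K (Fin 2) => j ᵥ* (FreeAlgebra.lift K ![A, B] p)) =
      Submodule.span K (Set.range fun k : ℕ => j ᵥ* (A ^ k)) := by
  clear hA hB
  have hB' : B = Matrix.vecMulVec i j - A := by rw [← h]; abel
  constructor
  · set W := Submodule.span K (Set.range fun k : ℕ => (A ^ k) *ᵥ i) with hW
    -- W is invariant under A and B
    have hAinv : ∀ v ∈ W, A *ᵥ v ∈ W := by
      intro v hv
      induction hv using Submodule.span_induction with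
      | mem x hx =>
        obtain ⟨k, rfl⟩ := hx
        exact Submodule.subset_span ⟨k + 1, by rw [Matrix.mulVec_mulVec, ← pow_succ']⟩
      | zero => simpa using W.zero_mem
      | add x y _ _ hx hy => rw [Matrix.mulVec_add]; exact W.add_mem hx hy
      | smul c x _ hx => rw [Matrix.mulVec_smul]; exact W.smul_mem c hx
    have hiW : i ∈ W := Submodule.subset_span ⟨0, by simp⟩
    have hBinv : ∀ v ∈ W, B *ᵥ v ∈ W := by
      intro v hv
      rw [hB', Matrix.sub_mulVec, vecMulVec_mulVec']
      exact W.sub_mem (W.smul_mem _ hiW) (hAinv v hv)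
    have key : ∀ p : FreeAlgebra K (Fin 2), ∀ v ∈ W,
        (FreeAlgebra.lift K ![A, B] p) *ᵥ v ∈ W := by
      intro p
      induction p using FreeAlgebra.induction with
      | grade0 r =>
        intro v hv
        rw [AlgHom.commutes, Algebra.algebraMap_eq_smul_one, Matrix.smul_mulVec,
          Matrix.one_mulVec]
        exact W.smul_mem r hv
      | grade1 x =>
        intro v hv
        rw [FreeAlgebra.lift_ι_apply]
        fin_cases x
        · exact hAinv v hv
        · exact hBinv v hv
      | mul a b ha hb =>
        intro v hv
        rw [_root_.map_mul, ← Matrix.mulVec_mulVec]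
        exact ha _ (hb v hv)
      | add a b ha hb =>
        intro v hv
        rw [map_add, Matrix.add_mulVec]
        exact W.add_mem (ha v hv) (hb v hv)
    apply le_antisymm
    · rw [Submodule.span_le]
      rintro _ ⟨p, rfl⟩
      exact key p i hiW
    · rw [Submodule.span_le]
      rintro _ ⟨k, rfl⟩
      refine Submodule.subset_span ⟨(FreeAlgebra.ι K 0) ^ k, ?_⟩
      simp [map_pow]
  · set W := Submodule.span K (Set.range fun k : ℕ => j ᵥ* (A ^ k)) with hW
    have hAinv : ∀ v ∈ W, v ᵥ* A ∈ W := by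
      intro v hv
      induction hv using Submodule.span_induction with
      | mem x hx =>
        obtain ⟨k, rfl⟩ := hx
        exact Submodule.subset_span ⟨k + 1, by rw [Matrix.vecMul_vecMul, ← pow_succ]⟩
      | zero => simpa using W.zero_mem
      | add x y _ _ hx hy => rw [Matrix.add_vecMul]; exact W.add_mem hx hy
      | smul c x _ hx => rw [Matrix.smul_vecMul]; exact W.smul_mem c hx
    have hjW : j ∈ W := Submodule.subset_span ⟨0, by simp⟩
    have hBinv : ∀ v ∈ W, v ᵥ* B ∈ W := by
      intro v hv
      rw [hB', Matrix.vecMul_sub, vecMul_vecMulVec']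
      exact W.sub_mem (W.smul_mem _ hjW) (hAinv v hv)
    have key : ∀ p : FreeAlgebra K (Fin 2), ∀ v ∈ W,
        v ᵥ* (FreeAlgebra.lift K ![A, B] p) ∈ W := by
      intro p
      induction p using FreeAlgebra.induction with
      | grade0 r =>
        intro v hv
        have : v ᵥ* (FreeAlgebra.lift K ![A, B]) (algebraMap K _ r) = r • v := by
          rw [AlgHom.commutes, Algebra.algebraMap_eq_smul_one]
          ext x
          simp [Matrix.vecMul, dotProduct, Matrix.one_apply, mul_comm]
        rw [this]; exact W.smul_mem r hv
      | grade1 x =>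
        intro v hv
        rw [FreeAlgebra.lift_ι_apply]
        fin_cases x
        · exact hAinv v hv
        · exact hBinv v hv
      | mul a b ha hb =>
        intro v hv
        rw [_root_.map_mul, ← Matrix.vecMul_vecMul]
        exact hb _ (ha v hv)
      | add a b ha hb =>
        intro v hv
        rw [map_add, Matrix.vecMul_add]
        exact W.add_mem (ha v hv) (hb v hv)
    apply le_antisymm
    · rw [Submodule.span_le]
      rintro _ ⟨p, rfl⟩
      exact key p j hjW
    · rw [Submodule.span_le]
      rintro _ ⟨k, rfl⟩
      refine Submodule.subset_span ⟨(FreeAlgebra.ι K 0) ^ k, ?_⟩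
      simp [map_pow]
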